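/- Let p > 1, M > 0, η > 0, K > 0 and let u : (0,T) → ℝ be nonnegative satisfying u'(t) ≤ −A u(t)^{p/(p−1)} + B where A = 4(p−1)η M^{-1/(p−1)} and B = 4K^p M. Then there exists a constant C = C(A, B, p) (independent of u(0)) such that u(t) ≤ C t^{-(p−1)} + C for all t ∈ (0,T). -/

import Mathlib

open Real

/-- Hypercontractivity comparison lemma: any nonnegative solution of
`u' ≤ -A u^{p/(p-1)} + B` on `(0,T)`, with `A = 4(p-1)η M^{-1/(p-1)}` and `B = 4K^p M`,
satisfies `u(t) ≤ C t^{-(p-1)} + C` for a constant `C = C(A,B,p)` independent of the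
initial datum. -/
theorem hypercontractivity_comparison (p M η K : ℝ)
    (hp : 1 < p) (hM : 0 < M) (hη : 0 < η) (hK : 0 < K) :
    ∃ C : ℝ, 0 < C ∧ ∀ (T : ℝ) (u u' : ℝ → ℝ),
      (∀ t ∈ Set.Ioo (0 : ℝ) T, 0 ≤ u t) →
      (∀ t ∈ Set.Ioo (0 : ℝ) T, HasDerivAt u (u' t) t) →
      (∀ t ∈ Set.Ioo (0 : ℝ) T,
        u' t ≤ -(4 * (p - 1) * η * M ^ (-(1 : ℝ) / (p - 1))) * u t ^ (p / (p - 1))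
                + 4 * K ^ p * M) →
      ∀ t ∈ Set.Ioo (0 : ℝ) T, u t ≤ C * t ^ (-(p - 1)) + C := by
  set A : ℝ := 4 * (p - 1) * η * M ^ (-(1 : ℝ) / (p - 1)) with hA
  set B : ℝ := 4 * K ^ p * M with hB
  have hp1 : (0 : ℝ) < p - 1 := by linarith
  have hp0 : (0 : ℝ) < p := by linarith
  have hA0 : 0 < A := by
    have : (0 : ℝ) < M ^ (-(1 : ℝ) / (p - 1)) := Real.rpow_pos_of_pos hM _
    positivity
  have hB0 : 0 < B := by
    have : (0 : ℝ) < K ^ p := Real.rpow_pos_of_pos hK _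
    positivity
  set q : ℝ := p / (p - 1) with hq
  have hq0 : 0 < q := by positivity
  set c₁ : ℝ := (2 * (p - 1) / A) ^ (p - 1) with hc₁
  set c₂ : ℝ := (2 * (B + 1) / A) ^ ((p - 1) / p) with hc₂
  have hr0 : (0 : ℝ) < 2 * (p - 1) / A := by positivity
  have hs0 : (0 : ℝ) < 2 * (B + 1) / A := by positivity
  have hc₁0 : 0 < c₁ := Real.rpow_pos_of_pos hr0 _
  have hc₂0 : 0 < c₂ := Real.rpow_pos_of_pos hs0 _
  -- key constant identities
  have hc₁q : A / 2 * (c₁ ^ q) = (p - 1) * c₁ := by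
    rw [hc₁, ← Real.rpow_mul hr0.le,
      show (p - 1) * q = (p - 1) + 1 by rw [hq]; field_simp; ring,
      Real.rpow_add hr0, Real.rpow_one]
    have h2 : A / 2 * (2 * (p - 1) / A) = p - 1 := by field_simp
    calc A / 2 * ((2 * (p - 1) / A) ^ (p - 1) * (2 * (p - 1) / A))
        = (A / 2 * (2 * (p - 1) / A)) * (2 * (p - 1) / A) ^ (p - 1) := by ring
      _ = (p - 1) * (2 * (p - 1) / A) ^ (p - 1) := by rw [h2]
  have hc₂q : A / 2 * (c₂ ^ q) = B + 1 := by
    rw [hc₂, ← Real.rpow_mul hs0.le,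
      show (p - 1) / p * q = 1 by rw [hq]; field_simp,
      Real.rpow_one]
    field_simp
  refine ⟨max (c₁ * 2 ^ (p - 1)) c₂, lt_max_iff.mpr (Or.inr hc₂0), ?_⟩
  intro T u u' hu0 hud hui t₀ ht₀
  obtain ⟨ht₀0, ht₀T⟩ := ht₀
  set b : ℝ := t₀ / 2 with hbdef
  have hb0 : 0 < b := by positivity
  have hbt : b < t₀ := by rw [hbdef]; linarith
  have hbIoo : b ∈ Set.Ioo (0 : ℝ) T := ⟨hb0, by rw [hbdef]; linarith⟩
  set δ : ℝ := ((u b + 1) / c₁) ^ (-(1 : ℝ) / (p - 1)) with hδdef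
  have hub0 : 0 < u b + 1 := by linarith [hu0 b hbIoo]
  have hδ0 : 0 < δ := Real.rpow_pos_of_pos (by positivity) _
  have hδval : c₁ * δ ^ (-(p - 1)) = u b + 1 := by
    rw [hδdef, ← Real.rpow_mul (by positivity : (0:ℝ) ≤ (u b + 1) / c₁),
      show -(1:ℝ) / (p - 1) * -(p - 1) = 1 by field_simp,
      Real.rpow_one]
    field_simp
  set a : ℝ := b - δ with hadef
  set φ : ℝ → ℝ := fun s => c₁ * (s - a) ^ (-(p - 1)) + c₂ with hφ
  set φ' : ℝ → ℝ := fun s => -((p - 1) * c₁) * (s - a) ^ (-p) with hφ'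
  have hsub : ∀ s ∈ Set.Icc b t₀, 0 < s - a := by
    intro s hs
    have h1 : b ≤ s := hs.1
    rw [hadef]
    linarith
  have hφderiv : ∀ s ∈ Set.Icc b t₀, HasDerivAt φ (φ' s) s := by
    intro s hs
    have h0 := hsub s hs
    have h1 : HasDerivAt (fun s : ℝ => s - a) 1 s := (hasDerivAt_id s).sub_const a
    have h2 := (h1.rpow_const (p := -(p - 1)) (Or.inl h0.ne')).const_mul c₁
    have h3 := h2.add_const c₂
    refine h3.congr_deriv ?_
    show _ = -((p - 1) * c₁) * (s - a) ^ (-p)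
    rw [show -(p - 1) - 1 = -p by ring]
    ring
  have hIccIoo : Set.Icc b t₀ ⊆ Set.Ioo (0 : ℝ) T := fun x hx =>
    ⟨lt_of_lt_of_le hb0 hx.1, lt_of_le_of_lt hx.2 ht₀T⟩
  have hcont : ContinuousOn u (Set.Icc b t₀) := fun x hx =>
    ((hud x (hIccIoo hx)).continuousAt).continuousWithinAt
  have hder : ∀ x ∈ Set.Ico b t₀, HasDerivWithinAt u (u' x) (Set.Ici x) x := fun x hx =>
    (hud x (hIccIoo (Set.Ico_subset_Icc_self hx))).hasDerivWithinAt
  have hinit : u b ≤ φ b := by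
    have hφb : φ b = u b + 1 + c₂ := by
      show c₁ * (b - a) ^ (-(p - 1)) + c₂ = u b + 1 + c₂
      rw [hadef, show b - (b - δ) = δ by ring, hδval]
    rw [hφb]; linarith
  have hφcont : ContinuousOn φ (Set.Icc b t₀) := fun x hx =>
    (hφderiv x hx).continuousAt.continuousWithinAt
  have hφder : ∀ x ∈ Set.Ico b t₀, HasDerivWithinAt φ (φ' x) (Set.Ici x) x := fun x hx =>
    (hφderiv x (Set.Ico_subset_Icc_self hx)).hasDerivWithinAt
  have hbound : ∀ x ∈ Set.Ico b t₀, u x = φ x → u' x < φ' x := by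
    intro x hx hux
    have hxIoo := hIccIoo (Set.Ico_subset_Icc_self hx)
    have h0 := hsub x (Set.Ico_subset_Icc_self hx)
    set y : ℝ := (x - a) ^ (-(p - 1)) with hy
    have hy0 : 0 < y := Real.rpow_pos_of_pos h0 _
    have hyq : y ^ q = (x - a) ^ (-p) := by
      rw [hy, ← Real.rpow_mul h0.le,
        show -(p - 1) * q = -p by rw [hq]; field_simp]
    have hmax : ((c₁ * y) ^ q + c₂ ^ q) / 2 ≤ (c₁ * y + c₂) ^ q := by
      have h1 : (c₁ * y) ^ q ≤ (c₁ * y + c₂) ^ q :=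
        Real.rpow_le_rpow (by positivity) (by linarith) hq0.le
      have h2 : c₂ ^ q ≤ (c₁ * y + c₂) ^ q :=
        Real.rpow_le_rpow hc₂0.le (by nlinarith) hq0.le
      linarith
    have hcy : (c₁ * y) ^ q = c₁ ^ q * y ^ q := Real.mul_rpow hc₁0.le hy0.le
    have e1 : A * (((c₁ * y) ^ q + c₂ ^ q) / 2) = (p - 1) * c₁ * y ^ q + (B + 1) := by
      rw [hcy]
      linear_combination y ^ q * hc₁q + hc₂q
    have hmul : (p - 1) * c₁ * y ^ q + (B + 1) ≤ A * (c₁ * y + c₂) ^ q := by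
      rw [← e1]
      exact mul_le_mul_of_nonneg_left hmax hA0.le
    have hub := hui x hxIoo
    rw [hux] at hub
    have hφx : φ x = c₁ * y + c₂ := rfl
    rw [hφx] at hub
    show u' x < -((p - 1) * c₁) * (x - a) ^ (-p)
    rw [← hyq]
    calc u' x ≤ -A * (c₁ * y + c₂) ^ q + B := hub
      _ ≤ -((p - 1) * c₁ * y ^ q + (B + 1)) + B := by linarith
      _ < -((p - 1) * c₁) * y ^ q := by ring_nf; linarith
  have key := image_le_of_deriv_right_lt_deriv_boundary' hcont hder hinit hφcont hφder hbound
  have hfin := key ⟨hbt.le, le_refl t₀⟩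
  have hta : t₀ / 2 ≤ t₀ - a := by rw [hadef, hbdef]; linarith
  have h2 : (t₀ - a) ^ (-(p - 1)) ≤ (t₀ / 2) ^ (-(p - 1)) :=
    Real.rpow_le_rpow_of_nonpos (by positivity) hta (by linarith)
  have h3 : (t₀ / 2) ^ (-(p - 1)) = 2 ^ (p - 1) * t₀ ^ (-(p - 1)) := by
    rw [Real.div_rpow ht₀0.le (by norm_num), Real.rpow_neg ht₀0.le,
      Real.rpow_neg (by norm_num : (0:ℝ) ≤ 2)]
    have h2p : (0:ℝ) < (2:ℝ) ^ (p - 1) := Real.rpow_pos_of_pos (by norm_num) _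
    field_simp
  have ht0pow : 0 < t₀ ^ (-(p - 1)) := Real.rpow_pos_of_pos ht₀0 _
  have hφt : φ t₀ ≤ c₁ * 2 ^ (p - 1) * t₀ ^ (-(p - 1)) + c₂ := by
    show c₁ * (t₀ - a) ^ (-(p - 1)) + c₂ ≤ c₁ * 2 ^ (p - 1) * t₀ ^ (-(p - 1)) + c₂
    have h4 := mul_le_mul_of_nonneg_left h2 hc₁0.le
    rw [h3] at h4
    rw [mul_assoc]
    linarith
  calc u t₀ ≤ φ t₀ := hfin
    _ ≤ c₁ * 2 ^ (p - 1) * t₀ ^ (-(p - 1)) + c₂ := hφt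
    _ ≤ max (c₁ * 2 ^ (p - 1)) c₂ * t₀ ^ (-(p - 1)) + max (c₁ * 2 ^ (p - 1)) c₂ := by
        have h4 := le_max_left (c₁ * 2 ^ (p - 1)) c₂
        have h5 := le_max_right (c₁ * 2 ^ (p - 1)) c₂
        have h6 := mul_le_mul_of_nonneg_right h4 ht0pow.le
        linarith
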